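/- Let X ⊆ ℝ^n satisfy: there is a constant k such that any two points x', y' ∈ X are joined by a C¹ curve in X with speed at most k|x' − y'|. Let f : X → ℝ^m be a C¹ function with derivative bounded in operator norm by L. Then the graph Γ(f) = {(x, f(x)) : x ∈ X} ⊆ ℝ^{n+m} satisfies the same property with constant (1+L)k: any two points p, q ∈ Γ(f) are joined by a C¹ curve in Γ(f) with speed at most (1+L)k|p − q|. -/

import Mathlib

open MeasureTheory Set ENNReal
noncomputable section

abbrev E (n : ℕ) := EuclideanSpace ℝ (Fin n)

/-- There is a C¹ curve in `S` from `x` to `y` of speed at most `c * ‖x − y‖`. -/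
def HasCurve {V : Type*} [NormedAddCommGroup V] [NormedSpace ℝ V]
    (S : Set V) (c : ℝ) (x y : V) : Prop :=
  ∃ γ : ℝ → V, γ 0 = x ∧ γ 1 = y ∧ (∀ t ∈ Set.Icc (0:ℝ) 1, γ t ∈ S) ∧
    ContDiffOn ℝ 1 γ (Set.Icc 0 1) ∧
    ∀ t ∈ Set.Icc (0:ℝ) 1, ‖derivWithin γ (Set.Icc 0 1) t‖ ≤ c * ‖x - y‖

/-- The graph of f over X, inside the ℓ²-product ℝ^n ×₂ ℝ^m ≅ ℝ^{n+m}. -/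
def FunGraph {n m : ℕ} (X : Set (E n)) (f : E n → E m) : Set (WithLp 2 (E n × E m)) :=
  {p | (WithLp.equiv 2 (E n × E m) p).1 ∈ X ∧
    (WithLp.equiv 2 (E n × E m) p).2 = f (WithLp.equiv 2 (E n × E m) p).1}

theorem stmt7 (n m : ℕ) (X : Set (E n)) (k L : ℝ) (hk : 0 < k)
    (hX : ∀ x ∈ X, ∀ y ∈ X, HasCurve X k x y)
    (f : E n → E m) (hf : ContDiffOn ℝ 1 f X)
    (hL : ∀ x ∈ X, ‖fderivWithin ℝ f X x‖ ≤ L) :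
    ∀ p ∈ FunGraph X f, ∀ q ∈ FunGraph X f, HasCurve (FunGraph X f) ((1 + L) * k) p q := by
  rintro p ⟨hpX, hpf⟩ q ⟨hqX, hqf⟩
  have hL0 : 0 ≤ L := le_trans (norm_nonneg _) (hL _ hpX)
  obtain ⟨γ, hγ0, hγ1, hγS, hγC, hγd⟩ := hX _ hpX _ hqX
  set e := WithLp.prodContinuousLinearEquiv 2 ℝ (E n) (E m) with he
  refine ⟨fun t => e.symm (γ t, f (γ t)), ?_, ?_, ?_, ?_, ?_⟩
  · show e.symm (γ 0, f (γ 0)) = p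
    rw [hγ0, ← hpf]
    rfl
  · show e.symm (γ 1, f (γ 1)) = q
    rw [hγ1, ← hqf]
    rfl
  · intro t ht
    exact ⟨hγS t ht, rfl⟩
  · exact e.symm.contDiff.comp_contDiffOn
      (hγC.prodMk (hf.comp hγC hγS))
  · intro t ht
    have hu : UniqueDiffWithinAt ℝ (Set.Icc (0:ℝ) 1) t := (uniqueDiffOn_Icc one_pos) t ht
    have hγdd : HasDerivWithinAt γ (derivWithin γ (Set.Icc 0 1) t) (Set.Icc 0 1) t :=
      ((hγC.differentiableOn one_ne_zero) t ht).hasDerivWithinAt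
    have hfd : HasFDerivWithinAt f (fderivWithin ℝ f X (γ t)) X (γ t) :=
      ((hf.differentiableOn one_ne_zero) _ (hγS t ht)).hasFDerivWithinAt
    have hcd : HasDerivWithinAt (fun s => f (γ s))
        (fderivWithin ℝ f X (γ t) (derivWithin γ (Set.Icc 0 1) t)) (Set.Icc 0 1) t :=
      hfd.comp_hasDerivWithinAt t hγdd hγS
    set a := derivWithin γ (Set.Icc 0 1) t with ha
    set b := fderivWithin ℝ f X (γ t) a with hb
    have : ContinuousSMul ℝ (WithLp 2 (E n × E m)) := IsBoundedSMul.continuousSMul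
    have hΓd : HasDerivWithinAt (fun s => e.symm (γ s, f (γ s)))
        (e.symm (a, b)) (Set.Icc 0 1) t :=
      (e.symm.toContinuousLinearMap.hasFDerivAt.comp_hasDerivWithinAt t (hγdd.prodMk hcd))
    rw [hΓd.derivWithin hu]
    have hab : ‖e.symm (a, b)‖ ≤ ‖a‖ + ‖b‖ := by
      rw [WithLp.prod_norm_eq_of_L2]
      have h1 : ‖(e.symm (a, b)).fst‖ = ‖a‖ := rfl
      have h2 : ‖(e.symm (a, b)).snd‖ = ‖b‖ := rfl
      rw [h1, h2]
      have : Real.sqrt ((‖a‖ + ‖b‖) ^ 2) = ‖a‖ + ‖b‖ :=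
        Real.sqrt_sq (by positivity)
      rw [← this]
      apply Real.sqrt_le_sqrt
      nlinarith [norm_nonneg a, norm_nonneg b]
    have hxy : ‖(WithLp.equiv 2 (E n × E m) p).1 - (WithLp.equiv 2 (E n × E m) q).1‖ ≤ ‖p - q‖ := by
      have : ‖p - q‖ = Real.sqrt (‖(p - q).fst‖ ^ 2 + ‖(p - q).snd‖ ^ 2) :=
        WithLp.prod_norm_eq_of_L2 _
      rw [this]
      have hfst : (p - q).fst =
          (WithLp.equiv 2 (E n × E m) p).1 - (WithLp.equiv 2 (E n × E m) q).1 := rfl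
      rw [← hfst]
      calc ‖(p - q).fst‖ = Real.sqrt (‖(p - q).fst‖ ^ 2) :=
            (Real.sqrt_sq (norm_nonneg _)).symm
        _ ≤ _ := Real.sqrt_le_sqrt (by nlinarith [norm_nonneg (p - q).snd])
    have hak : ‖a‖ ≤ k * ‖(WithLp.equiv 2 (E n × E m) p).1 - (WithLp.equiv 2 (E n × E m) q).1‖ :=
      hγd t ht
    have hbL : ‖b‖ ≤ L * ‖a‖ := by
      calc ‖b‖ ≤ ‖fderivWithin ℝ f X (γ t)‖ * ‖a‖ :=
            (fderivWithin ℝ f X (γ t)).le_opNorm a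
        _ ≤ L * ‖a‖ := by
            apply mul_le_mul_of_nonneg_right (hL _ (hγS t ht)) (norm_nonneg a)
    have h1L : (0:ℝ) ≤ 1 + L := by linarith
    calc ‖e.symm (a, b)‖ ≤ ‖a‖ + ‖b‖ := hab
      _ ≤ ‖a‖ + L * ‖a‖ := by linarith
      _ = (1 + L) * ‖a‖ := by ring
      _ ≤ (1 + L) * (k * ‖(WithLp.equiv 2 (E n × E m) p).1 - (WithLp.equiv 2 (E n × E m) q).1‖) := by
          apply mul_le_mul_of_nonneg_left hak h1L
      _ ≤ (1 + L) * (k * ‖p - q‖) := by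
          apply mul_le_mul_of_nonneg_left _ h1L
          exact mul_le_mul_of_nonneg_left hxy hk.le
      _ = (1 + L) * k * ‖p - q‖ := by ring
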